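/- Let 0 < Λ < 1. Then the function κ_Λ is strictly concave on the interval [0, π − arcsin Λ]. -/

import Mathlib

open Real Set

noncomputable section

/-- `f_{θ,Λ}(η) = cos(θ + 2η) + 2Λ sin η`. -/
def fFun (θ Λ η : ℝ) : ℝ := Real.cos (θ + 2 * η) + 2 * Λ * Real.sin η

/-- `κ_Λ(θ) = inf_{η ∈ [0,(π−θ)/2]} f_{θ,Λ}(η)`. -/
def kappaFun (Λ θ : ℝ) : ℝ := sInf (fFun θ Λ '' Set.Icc 0 ((Real.pi - θ) / 2))

end

namespace Stmt11Aux

open Real Set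

lemma continuous_fFun (θ Λ : ℝ) : Continuous (fFun θ Λ) := by
  unfold fFun
  fun_prop

lemma hasDerivAt_fFun (θ Λ η : ℝ) :
    HasDerivAt (fFun θ Λ) (-2 * Real.sin (θ + 2 * η) + 2 * Λ * Real.cos η) η := by
  have h1 : HasDerivAt (fun x : ℝ => θ + 2 * x) 2 η := by
    simpa using ((hasDerivAt_id η).const_mul 2).const_add θ
  have h2 : HasDerivAt (fun x : ℝ => Real.cos (θ + 2 * x)) (-Real.sin (θ + 2 * η) * 2) η :=
    by have := (Real.hasDerivAt_cos (θ + 2 * η)).comp η h1; exact this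
  have h3 : HasDerivAt (fun x : ℝ => 2 * Λ * Real.sin x) (2 * Λ * Real.cos η) η :=
    (Real.hasDerivAt_sin η).const_mul (2 * Λ)
  have := h2.add h3
  exact this.congr_deriv (by ring)

lemma deriv_fFun (θ Λ : ℝ) :
    deriv (fFun θ Λ) = fun η => -2 * Real.sin (θ + 2 * η) + 2 * Λ * Real.cos η :=
  funext fun η => (hasDerivAt_fFun θ Λ η).deriv

lemma hasDerivAt_deriv_fFun (θ Λ η : ℝ) :
    HasDerivAt (fun η => -2 * Real.sin (θ + 2 * η) + 2 * Λ * Real.cos η)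
      (-4 * Real.cos (θ + 2 * η) - 2 * Λ * Real.sin η) η := by
  have h1 : HasDerivAt (fun x : ℝ => θ + 2 * x) 2 η := by
    simpa using ((hasDerivAt_id η).const_mul 2).const_add θ
  have h2 : HasDerivAt (fun x : ℝ => Real.sin (θ + 2 * x)) (Real.cos (θ + 2 * η) * 2) η :=
    by have := (Real.hasDerivAt_sin (θ + 2 * η)).comp η h1; exact this
  have h2' : HasDerivAt (fun x : ℝ => -2 * Real.sin (θ + 2 * x))
      (-2 * (Real.cos (θ + 2 * η) * 2)) η := h2.const_mul (-2)
  have h3 : HasDerivAt (fun x : ℝ => 2 * Λ * Real.cos x) (2 * Λ * -Real.sin η) η :=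
    (Real.hasDerivAt_cos η).const_mul (2 * Λ)
  have := h2'.add h3
  exact this.congr_deriv (by ring)

lemma sin_gt {Λ : ℝ} (hΛ0 : 0 < Λ) (hΛ1 : Λ < 1) {ψ : ℝ}
    (h1 : Real.arcsin Λ < ψ) (h2 : ψ < Real.pi - Real.arcsin Λ) : Λ < Real.sin ψ := by
  have hΛ : Real.sin (Real.arcsin Λ) = Λ := Real.sin_arcsin (by linarith) hΛ1.le
  have hα0 : 0 < Real.arcsin Λ := Real.arcsin_pos.2 hΛ0
  rcases le_or_gt ψ (Real.pi / 2) with h | h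
  · have := Real.sin_lt_sin_of_lt_of_le_pi_div_two (x := Real.arcsin Λ) (y := ψ)
      (by linarith) h h1
    linarith [hΛ ▸ this]
  · rw [← Real.sin_pi_sub]
    have := Real.sin_lt_sin_of_lt_of_le_pi_div_two (x := Real.arcsin Λ) (y := Real.pi - ψ)
      (by linarith) (by linarith) (by linarith)
    linarith [hΛ ▸ this]

/-- Key analytic lemma: the minimum of `f_{θ,Λ}` over `[0,(π−θ)/2]` is attained at a point
`η` with `θ + 2η ≥ π − arcsin Λ`. -/
lemma key (Λ θ : ℝ) (hΛ0 : 0 < Λ) (hΛ1 : Λ < 1) (hθ0 : 0 ≤ θ)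
    (hθ1 : θ ≤ Real.pi - Real.arcsin Λ) :
    ∃ η, ((Real.pi - Real.arcsin Λ - θ) / 2 ≤ η ∧ η ≤ (Real.pi - θ) / 2) ∧
      IsLeast (fFun θ Λ '' Icc 0 ((Real.pi - θ) / 2)) (fFun θ Λ η) := by
  have hπ := Real.pi_pos
  set α := Real.arcsin Λ with hαdef
  have hΛs : Real.sin α = Λ := Real.sin_arcsin (by linarith) hΛ1.le
  have hα0 : 0 < α := Real.arcsin_pos.2 hΛ0
  have hα2 : α < Real.pi / 2 := Real.arcsin_lt_pi_div_two.2 hΛ1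
  set c := (Real.pi - α - θ) / 2 with hcdef
  set H := (Real.pi - θ) / 2 with hHdef
  have hcH : c ≤ H := by rw [hcdef, hHdef]; linarith
  have hc0 : 0 ≤ c := by rw [hcdef]; linarith
  obtain ⟨η, hηmem, hmin⟩ := isCompact_Icc.exists_isMinOn (nonempty_Icc.2 hcH)
    ((continuous_fFun θ Λ).continuousOn)
  have hmin' : ∀ z ∈ Icc c H, fFun θ Λ η ≤ fFun θ Λ z := fun z hz => isMinOn_iff.mp hmin z hz
  refine ⟨η, ⟨hηmem.1, hηmem.2⟩, mem_image_of_mem _ ⟨hc0.trans hηmem.1, hηmem.2⟩, ?_⟩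
  rintro y ⟨z, hz, rfl⟩
  set e := max ((α - θ) / 2) 0 with hedef
  have hec : e ≤ c := by
    rw [hedef, hcdef]
    apply max_le <;> linarith
  -- f is antitone on [e, c]
  have hanti : AntitoneOn (fFun θ Λ) (Icc e c) := by
    apply antitoneOn_of_deriv_nonpos (convex_Icc _ _) (continuous_fFun θ Λ).continuousOn
      (fun x _ => (hasDerivAt_fFun θ Λ x).differentiableAt.differentiableWithinAt)
    intro x hx
    rw [interior_Icc] at hx
    rw [deriv_fFun]
    have hx1 : (α - θ) / 2 < x := lt_of_le_of_lt (le_max_left _ _) hx.1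
    have hx0 : 0 < x := lt_of_le_of_lt (le_max_right _ _) hx.1
    have hxc : x < (Real.pi - α - θ) / 2 := hx.2
    have hsin : Λ < Real.sin (θ + 2 * x) := by
      apply sin_gt hΛ0 hΛ1
      · linarith
      · linarith
    have hcos : Real.cos x ≤ 1 := Real.cos_le_one x
    show -2 * Real.sin (θ + 2 * x) + 2 * Λ * Real.cos x ≤ 0
    nlinarith [mul_le_mul_of_nonneg_left hcos hΛ0.le]
  have hfc : fFun θ Λ η ≤ fFun θ Λ c := hmin' c ⟨le_rfl, hcH⟩
  rcases le_or_gt c z with h | h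
  · exact hmin' z ⟨h, hz.2⟩
  rcases le_or_gt e z with h2 | h2
  · exact hfc.trans (hanti ⟨h2, h.le⟩ ⟨hec, le_rfl⟩ h.le)
  · -- z < e ; then θ < α and e = (α - θ)/2
    have he0 : 0 < e := lt_of_le_of_lt hz.1 h2
    have hθα : θ < α := by
      by_contra hcon
      push_neg at hcon
      have : e = 0 := max_eq_right (by linarith)
      rw [this] at he0; exact lt_irrefl 0 he0
    have hee : e = (α - θ) / 2 := max_eq_left (by linarith)
    -- concavity of f on [0, e]
    have hconc : ConcaveOn ℝ (Icc 0 e) (fFun θ Λ) := by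
      apply concaveOn_of_deriv2_nonpos (convex_Icc _ _) (continuous_fFun θ Λ).continuousOn
        (fun x _ => (hasDerivAt_fFun θ Λ x).differentiableAt.differentiableWithinAt)
      · intro x _
        rw [deriv_fFun]
        exact (hasDerivAt_deriv_fFun θ Λ x).differentiableAt.differentiableWithinAt
      · intro x hx
        rw [interior_Icc] at hx
        have hderiv2 : deriv^[2] (fFun θ Λ) x = -4 * Real.cos (θ + 2 * x) - 2 * Λ * Real.sin x := by
          have : deriv^[2] (fFun θ Λ) x = deriv (deriv (fFun θ Λ)) x := by
            simp [Function.iterate_succ, Function.iterate_zero, Function.comp]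
          rw [this, deriv_fFun]
          exact (hasDerivAt_deriv_fFun θ Λ x).deriv
        rw [hderiv2]
        have hx0 : 0 < x := hx.1
        have hxe : x < (α - θ) / 2 := hee ▸ hx.2
        have hcos : 0 ≤ Real.cos (θ + 2 * x) :=
          Real.cos_nonneg_of_mem_Icc ⟨by linarith, by linarith⟩
        have hsin : 0 ≤ Real.sin x := Real.sin_nonneg_of_nonneg_of_le_pi hx0.le (by linarith)
        nlinarith
    have hminend : min (fFun θ Λ 0) (fFun θ Λ e) ≤ fFun θ Λ z :=
      hconc.min_le_of_mem_Icc (left_mem_Icc.2 he0.le) (right_mem_Icc.2 he0.le)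
        ⟨hz.1, h2.le⟩
    have hfe : fFun θ Λ c ≤ fFun θ Λ e := hanti ⟨le_rfl, hec⟩ ⟨hec, le_rfl⟩ hec
    -- f 0 ≥ f (π/2 − θ) ≥ f η
    have hη₀mem : Real.pi / 2 - θ ∈ Icc c H := by
      constructor
      · rw [hcdef]; linarith
      · rw [hHdef]; linarith
    have hf0 : fFun θ Λ (Real.pi / 2 - θ) ≤ fFun θ Λ 0 := by
      have e1 : θ + 2 * (Real.pi / 2 - θ) = Real.pi - θ := by ring
      have e2 : θ + 2 * (0 : ℝ) = θ := by ring
      rw [fFun, fFun, e1, e2, Real.sin_zero, Real.cos_pi_sub, Real.sin_pi_div_two_sub]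
      have hcθ : 0 ≤ Real.cos θ :=
        Real.cos_nonneg_of_mem_Icc ⟨by linarith, by linarith⟩
      nlinarith
    have hfη0 : fFun θ Λ η ≤ fFun θ Λ (Real.pi / 2 - θ) := hmin' _ hη₀mem
    rcases min_cases (fFun θ Λ 0) (fFun θ Λ e) with ⟨hm, _⟩ | ⟨hm, _⟩ <;> rw [hm] at hminend
    · linarith
    · linarith

end Stmt11Aux

theorem stmt11 (Λ : ℝ) (hΛ0 : 0 < Λ) (hΛ1 : Λ < 1) :
    StrictConcaveOn ℝ (Set.Icc 0 (Real.pi - Real.arcsin Λ)) (kappaFun Λ) := by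
  have hπ := Real.pi_pos
  have hα0 : 0 < Real.arcsin Λ := Real.arcsin_pos.2 hΛ0
  have hα2 : Real.arcsin Λ < Real.pi / 2 := Real.arcsin_lt_pi_div_two.2 hΛ1
  refine ⟨convex_Icc _ _, ?_⟩
  intro x hx y hy hxy a b ha hb hab
  simp only [smul_eq_mul] at *
  set θm := a * x + b * y with hθmdef
  have hθm0 : 0 ≤ θm := add_nonneg (mul_nonneg ha.le hx.1) (mul_nonneg hb.le hy.1)
  have hθm1 : θm ≤ Real.pi - Real.arcsin Λ := by
    have h1 := mul_le_mul_of_nonneg_left hx.2 ha.le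
    have h2 := mul_le_mul_of_nonneg_left hy.2 hb.le
    nlinarith
  obtain ⟨η, ⟨hη1, hη2⟩, hleast⟩ := Stmt11Aux.key Λ θm hΛ0 hΛ1 hθm0 hθm1
  have hκm : kappaFun Λ θm = fFun θm Λ η := by
    rw [kappaFun]; exact hleast.csInf_eq
  have hx0' : 0 ≤ x := hx.1
  have hx1' : x ≤ Real.pi - Real.arcsin Λ := hx.2
  have hy0' : 0 ≤ y := hy.1
  have hy1' : y ≤ Real.pi - Real.arcsin Λ := hy.2
  set η₁ := η + (θm - x) / 2 with hη₁def
  set η₂ := η + (θm - y) / 2 with hη₂def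
  have hη₁0 : 0 ≤ η₁ := by rw [hη₁def]; linarith
  have hη₂0 : 0 ≤ η₂ := by rw [hη₂def]; linarith
  have hη₁H : η₁ ≤ (Real.pi - x) / 2 := by rw [hη₁def]; linarith
  have hη₂H : η₂ ≤ (Real.pi - y) / 2 := by rw [hη₂def]; linarith
  clear_value θm η₁ η₂
  have hκx : kappaFun Λ x ≤ fFun x Λ η₁ := by
    apply csInf_le ((isCompact_Icc.image (Stmt11Aux.continuous_fFun x Λ)).bddBelow)
    exact Set.mem_image_of_mem _ ⟨hη₁0, hη₁H⟩
  have hκy : kappaFun Λ y ≤ fFun y Λ η₂ := by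
    apply csInf_le ((isCompact_Icc.image (Stmt11Aux.continuous_fFun y Λ)).bddBelow)
    exact Set.mem_image_of_mem _ ⟨hη₂0, hη₂H⟩
  have hne : η₁ ≠ η₂ := by
    rw [hη₁def, hη₂def]
    intro hcon
    apply hxy
    have : x = y := by linarith [sub_eq_zero.mpr hcon]
    exact this
  have hsum : a * η₁ + b * η₂ = η := by
    rw [hη₁def, hη₂def, hθmdef]
    ring_nf
    linear_combination (η + (a * x + b * y) / 2) * hab
  have hsin : a * Real.sin η₁ + b * Real.sin η₂ < Real.sin η := by
    have hmem1 : η₁ ∈ Set.Icc 0 Real.pi := ⟨hη₁0, by linarith⟩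
    have hmem2 : η₂ ∈ Set.Icc 0 Real.pi := ⟨hη₂0, by linarith⟩
    have := strictConcaveOn_sin_Icc.2 hmem1 hmem2 hne ha hb hab
    simp only [smul_eq_mul] at this
    rwa [hsum] at this
  have e1 : x + 2 * η₁ = θm + 2 * η := by rw [hη₁def]; ring
  have e2 : y + 2 * η₂ = θm + 2 * η := by rw [hη₂def]; ring
  have hfx : fFun x Λ η₁ = Real.cos (θm + 2 * η) + 2 * Λ * Real.sin η₁ := by
    rw [fFun, e1]
  have hfy : fFun y Λ η₂ = Real.cos (θm + 2 * η) + 2 * Λ * Real.sin η₂ := by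
    rw [fFun, e2]
  have hchain : a * kappaFun Λ x + b * kappaFun Λ y
      < Real.cos (θm + 2 * η) + 2 * Λ * Real.sin η := by
    have h1 : a * kappaFun Λ x ≤ a * fFun x Λ η₁ := mul_le_mul_of_nonneg_left hκx ha.le
    have h2 : b * kappaFun Λ y ≤ b * fFun y Λ η₂ := mul_le_mul_of_nonneg_left hκy hb.le
    rw [hfx] at h1; rw [hfy] at h2
    have hs2 : 2 * Λ * (a * Real.sin η₁ + b * Real.sin η₂) < 2 * Λ * Real.sin η :=
      mul_lt_mul_of_pos_left hsin (by linarith)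
    have hcomb : a * (Real.cos (θm + 2 * η) + 2 * Λ * Real.sin η₁)
        + b * (Real.cos (θm + 2 * η) + 2 * Λ * Real.sin η₂)
        = Real.cos (θm + 2 * η) + 2 * Λ * (a * Real.sin η₁ + b * Real.sin η₂) := by
      linear_combination Real.cos (θm + 2 * η) * hab
    linarith
  calc a * kappaFun Λ x + b * kappaFun Λ y
      < Real.cos (θm + 2 * η) + 2 * Λ * Real.sin η := hchain
    _ = kappaFun Λ θm := by rw [hκm, fFun]
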